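/- Every caterpillar has linear rank-width at most 1. -/

import Mathlib

open scoped Classical

variable {V : Type*} [Fintype V] [DecidableEq V]

/-- GF(2)-rank of the adjacency submatrix `A_G[X, V \ X]`. -/
noncomputable def cutrk (G : SimpleGraph V) (X : Finset V) : ℕ :=
  (Matrix.of fun (a : X) (b : (Xᶜ : Finset V)) =>
    if G.Adj a.1 b.1 then (1 : ZMod 2) else 0).rank

/-- The cutrank of a linear ordering of the vertices. -/
noncomputable def ordCutrk (G : SimpleGraph V) (e : Fin (Fintype.card V) ≃ V) : ℕ :=
  Finset.univ.sup fun i : Fin (Fintype.card V) => cutrk G ((Finset.Iic i).image e)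

/-- Linear rank-width: minimum cutrank over all linear orderings of the vertices. -/
noncomputable def lrw (G : SimpleGraph V) : ℕ :=
  ⨅ e : Fin (Fintype.card V) ≃ V, ordCutrk G e

/-- A graph is "path-like" if it is an acyclic, preconnected graph of maximum degree
at most 2, i.e. a path, a single vertex, or the empty graph. -/
def IsPathish {W : Type*} (H : SimpleGraph W) : Prop :=
  H.Preconnected ∧ H.IsAcyclic ∧ ∀ w : W, (H.neighborSet w).ncard ≤ 2

/-- A caterpillar: a tree in which the removal of all leaves results in a path
(or an empty or single-vertex graph). -/
def IsCaterpillar (G : SimpleGraph V) : Prop :=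
  G.IsTree ∧ IsPathish (G.induce {v | (G.neighborSet v).ncard ≠ 1})

set_option linter.unusedSectionVars false
set_option maxHeartbeats 1000000

open SimpleGraph in
lemma cutrk_le_one_of_target {G : SimpleGraph V} {X : Finset V} (w : V)
    (hw : ∀ a b : V, a ∈ X → b ∉ X → G.Adj a b → b = w) : cutrk G X ≤ 1 := by
  have hM : (Matrix.of fun (a : X) (b : (Xᶜ : Finset V)) =>
      if G.Adj a.1 b.1 then (1 : ZMod 2) else 0) =
      Matrix.vecMulVec (fun a : X => if G.Adj a.1 w then (1 : ZMod 2) else 0)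
        (fun b : (Xᶜ : Finset V) => if (b.1 : V) = w then (1 : ZMod 2) else 0) := by
    ext a b
    simp only [Matrix.of_apply, Matrix.vecMulVec_apply]
    by_cases hb : (b.1 : V) = w
    · rw [hb]; simp
    · have hadj : ¬ G.Adj a.1 b.1 := fun hadj => hb (hw a.1 b.1 a.2 (Finset.mem_compl.mp b.2) hadj)
      simp [hadj, hb]
  unfold cutrk
  rw [hM, Matrix.vecMulVec_eq Unit]
  refine le_trans (Matrix.rank_mul_le_right _ _) ?_
  refine le_trans (Matrix.rank_le_card_height _) ?_
  simp

open SimpleGraph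

lemma walk_confined {G : SimpleGraph V} {u v : V}
    (hu : ∀ x, G.Adj u x → x = v) (hv : ∀ x, G.Adj v x → x = u) :
    ∀ {w : V} (_ : G.Walk w u), w = u ∨ w = v := by
  intro w p
  induction p with
  | nil => exact Or.inl rfl
  | cons h q ih =>
    rcases ih hu hv with rfl | rfl
    · exact Or.inr (hu _ h.symm)
    · exact Or.inl (hv _ h.symm)

lemma exists_crossing {G : SimpleGraph V} (T : List V) (s : Finset V) :
    ∀ {x c : V} (u : G.Walk x c), x ∉ T → c ∈ T → (∀ v ∈ u.support, v ∈ s) →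
      ∃ y z : V, G.Adj y z ∧ y ∈ s ∧ y ∉ T ∧ z ∈ T := by
  intro x c u
  induction u with
  | nil => intro hx hc _; exact absurd hc hx
  | @cons a b c h q ih =>
    intro hx hc hs
    by_cases hm : b ∈ T
    · exact ⟨a, b, h, hs a (Walk.start_mem_support _), hx, hm⟩
    · exact ih hm hc (fun v hv => hs v (by rw [Walk.support_cons]; exact List.mem_cons_of_mem _ hv))

lemma no_chord {G : SimpleGraph V} (hacyc : G.IsAcyclic) {a y : V} (r : G.Walk a y)
    (hr : r.IsPath) (h : G.Adj y a) (hlen : 2 ≤ r.length) : False := by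
  have hne : s(y, a) ∉ r.edges := by
    intro hmem
    cases r with
    | nil => simp at hlen
    | @cons _ c _ h' r' =>
      rw [Walk.edges_cons] at hmem
      rcases List.mem_cons.mp hmem with heq | hmem'
      · rw [Sym2.eq_iff] at heq
        rcases heq with ⟨rfl, rfl⟩ | ⟨rfl, -⟩
        · exact h.ne rfl
        · -- r' : Walk y y, IsPath
          rw [Walk.cons_isPath_iff] at hr
          cases r' with
          | nil => rw [Walk.length_cons, Walk.length_nil] at hlen; omega
          | cons h'' r'' =>
            rw [Walk.cons_isPath_iff] at hr
            exact hr.1.2 (Walk.end_mem_support _)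
      · rw [Walk.cons_isPath_iff] at hr
        exact hr.2 (Walk.snd_mem_support_of_mem_edges _ hmem')
  exact hacyc _ ((Walk.cons_isCycle_iff r h).mpr ⟨hr, hne⟩)

lemma adj_consec {G : SimpleGraph V} (hacyc : G.IsAcyclic) :
    ∀ {a b : V} (p : G.Walk a b), p.IsPath → ∀ {x y : V}, G.Adj x y →
      x ∈ p.support → y ∈ p.support →
      (∃ l₁ l₂, p.support = l₁ ++ x :: y :: l₂) ∨ (∃ l₁ l₂, p.support = l₁ ++ y :: x :: l₂) := by
  intro a b p
  induction p with
  | nil =>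
    intro hp x y hxy hx hy
    simp only [Walk.support_nil, List.mem_singleton] at hx hy
    subst hx; subst hy; exact absurd rfl hxy.ne
  | @cons u v b h q ih =>
    intro hp x y hxy hx hy
    rw [Walk.cons_isPath_iff] at hp
    rw [Walk.support_cons, List.mem_cons] at hx hy
    rcases hx with rfl | hx <;> rcases hy with rfl | hy
    · exact absurd rfl hxy.ne
    · -- x = u, y in q.support
      by_cases hyv : y = v
      · subst hyv
        left
        exact ⟨[], q.support.tail, by rw [Walk.support_cons]; exact congrArg (List.cons x) q.support_eq_cons⟩
      · exfalso
        have hr : (Walk.cons h (q.takeUntil y hy)).IsPath := by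
          rw [Walk.cons_isPath_iff]
          exact ⟨hp.1.takeUntil hy, fun hm => hp.2 (Walk.support_takeUntil_subset _ hy hm)⟩
        refine no_chord hacyc _ hr hxy.symm ?_
        rw [Walk.length_cons]
        have : (q.takeUntil y hy).length ≠ 0 := fun h0 => hyv (Walk.eq_of_length_eq_zero h0).symm
        omega
    · -- y = u, x in q.support
      by_cases hxv : x = v
      · subst hxv
        right
        exact ⟨[], q.support.tail, by rw [Walk.support_cons]; exact congrArg (List.cons y) q.support_eq_cons⟩
      · exfalso
        have hr : (Walk.cons h (q.takeUntil x hx)).IsPath := by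
          rw [Walk.cons_isPath_iff]
          exact ⟨hp.1.takeUntil hx, fun hm => hp.2 (Walk.support_takeUntil_subset _ hx hm)⟩
        refine no_chord hacyc _ hr hxy ?_
        rw [Walk.length_cons]
        have : (q.takeUntil x hx).length ≠ 0 := fun h0 => hxv (Walk.eq_of_length_eq_zero h0).symm
        omega
    · rcases ih hp.1 hxy hx hy with ⟨l₁, l₂, hl⟩ | ⟨l₁, l₂, hl⟩
      · exact Or.inl ⟨u :: l₁, l₂, by rw [Walk.support_cons, hl]; rfl⟩
      · exact Or.inr ⟨u :: l₁, l₂, by rw [Walk.support_cons, hl]; rfl⟩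

lemma indexOf_infix {x y : V} : ∀ (l₁ l₂ : List V), (l₁ ++ x :: y :: l₂).Nodup →
    List.idxOf y (l₁ ++ x :: y :: l₂) = List.idxOf x (l₁ ++ x :: y :: l₂) + 1 := by
  intro l₁
  induction l₁ with
  | nil =>
    intro l₂ hnd
    simp only [List.nil_append]
    have hxy : x ≠ y := by
      rcases List.nodup_cons.mp hnd with ⟨hx, -⟩
      exact fun h => hx (h ▸ List.mem_cons_self)
    rw [List.idxOf_cons_ne _ hxy, List.idxOf_cons_self, List.idxOf_cons_self]
  | cons a t ih =>
    intro l₂ hnd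
    rw [List.cons_append] at hnd ⊢
    rcases List.nodup_cons.mp hnd with ⟨ha, hnd'⟩
    have hax : a ≠ x := fun h => ha (h ▸ (List.mem_append.mpr (Or.inr (List.mem_cons_self))))
    have hay : a ≠ y := fun h => ha (h ▸ (List.mem_append.mpr (Or.inr (List.mem_cons_of_mem _ (List.mem_cons_self)))))
    rw [List.idxOf_cons_ne _ hay, List.idxOf_cons_ne _ hax, ih _ hnd']

lemma blockLt {N : ℕ} (i₁ i₂ r₁ r₂ : ℕ) (h₁ : r₁ < N) (h₂ : r₂ < N) :
    i₁ * N + r₁ < i₂ * N + r₂ ↔ i₁ < i₂ ∨ (i₁ = i₂ ∧ r₁ < r₂) := by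
  constructor
  · intro h
    rcases lt_trichotomy i₁ i₂ with h' | h' | h'
    · exact Or.inl h'
    · subst h'; exact Or.inr ⟨rfl, by omega⟩
    · exfalso
      have : i₂ * N + r₂ < i₁ * N + 1 := by
        calc i₂ * N + r₂ < i₂ * N + N := by omega
          _ = (i₂ + 1) * N := by ring
          _ ≤ i₁ * N := Nat.mul_le_mul_right _ h'
          _ < i₁ * N + 1 := by omega
      omega
  · rintro (h | ⟨rfl, h⟩)
    · calc i₁ * N + r₁ < i₁ * N + N := by omega
        _ = (i₁ + 1) * N := by ring
        _ ≤ i₂ * N := Nat.mul_le_mul_right _ h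
        _ ≤ i₂ * N + r₂ := Nat.le_add_right _ _
    · omega

lemma exists_path_list (G : SimpleGraph V) (hacyc : G.IsAcyclic) (s : Finset V) (hne : s.Nonempty)
    (hc : ∀ a ∈ s, ∀ b ∈ s, ∃ p : G.Walk a b, ∀ x ∈ p.support, x ∈ s)
    (hd : ∀ a ∈ s, (s.filter (fun x => G.Adj a x)).card ≤ 2) :
    ∃ SL : List V, SL.Nodup ∧ (∀ x, x ∈ SL ↔ x ∈ s) ∧
      ∀ x y, G.Adj x y → x ∈ s → y ∈ s →
        List.idxOf y SL = List.idxOf x SL + 1 ∨ List.idxOf x SL = List.idxOf y SL + 1 := by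
  classical
  set P : ℕ → Prop := fun l => ∃ (a : V) (b : V) (w : G.Walk a b), w.IsPath ∧
    (∀ x ∈ w.support, x ∈ s) ∧ w.length = l with hPdef
  obtain ⟨a₀, ha₀⟩ := hne
  have hP0 : P 0 := ⟨a₀, a₀, Walk.nil, by simp, by simp [ha₀], rfl⟩
  set m := Nat.findGreatest P (Fintype.card V) with hm
  have hPm : P m := Nat.findGreatest_spec (Nat.zero_le _) hP0
  obtain ⟨a, b, w, hw, hsupp, hlen⟩ := hPm
  have hmax : ∀ (c d : V) (w' : G.Walk c d), w'.IsPath → (∀ x ∈ w'.support, x ∈ s) →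
      w'.length ≤ m := by
    intro c d w' hw' hs'
    exact Nat.le_findGreatest (le_of_lt hw'.length_lt) ⟨c, d, w', hw', hs', rfl⟩
  -- coverage
  have hcov : ∀ x ∈ s, x ∈ w.support := by
    intro x hx
    by_contra hxT
    obtain ⟨p, hp⟩ := hc x hx a (hsupp a w.start_mem_support)
    obtain ⟨y, z, hyz, hys, hyT, hzT⟩ :=
      exists_crossing w.support s p hxT w.start_mem_support hp
    by_cases hza : z = a
    · subst hza
      have hp' : (Walk.cons hyz w).IsPath := hw.cons hyT
      have hle := hmax _ _ _ hp' (by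
        intro v hv
        rw [Walk.support_cons] at hv
        rcases List.mem_cons.mp hv with rfl | hv
        · exact hys
        · exact hsupp v hv)
      rw [Walk.length_cons, hlen] at hle
      omega
    · by_cases hzb : z = b
      · subst hzb
        have hyT' : y ∉ w.reverse.support := by rwa [Walk.support_reverse, List.mem_reverse]
        have hp' : (Walk.cons hyz w.reverse).IsPath := hw.reverse.cons hyT'
        have hle := hmax _ _ _ hp' (by
          intro v hv
          rw [Walk.support_cons] at hv
          rcases List.mem_cons.mp hv with rfl | hv
          · exact hys
          · exact hsupp v (by rwa [Walk.support_reverse, List.mem_reverse] at hv))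
        rw [Walk.length_cons, Walk.length_reverse, hlen] at hle
        omega
      · -- interior
        have hzs : z ∈ s := hsupp z hzT
        have ht₁ : (w.takeUntil z hzT).IsPath := hw.takeUntil hzT
        have ht₂ : (w.dropUntil z hzT).IsPath := hw.dropUntil hzT
        obtain ⟨x₁, h₁, q₁, heq₁⟩ := Walk.exists_eq_cons_of_ne hza (w.takeUntil z hzT).reverse
        obtain ⟨x₂, h₂, q₂, heq₂⟩ := Walk.exists_eq_cons_of_ne hzb (w.dropUntil z hzT)
        have happ : w.support = (w.takeUntil z hzT).support ++ (w.dropUntil z hzT).support.tail := by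
          conv_lhs => rw [← w.take_spec hzT]
          exact Walk.support_append _ _
        have hx₁ : x₁ ∈ (w.takeUntil z hzT).support := by
          have : x₁ ∈ (w.takeUntil z hzT).reverse.support := by
            rw [heq₁, Walk.support_cons]
            exact List.mem_cons_of_mem _ q₁.start_mem_support
          rwa [Walk.support_reverse, List.mem_reverse] at this
        have hx₂ : x₂ ∈ (w.dropUntil z hzT).support.tail := by
          rw [heq₂, Walk.support_cons]
          exact q₂.start_mem_support
        have hnd := hw.support_nodup
        rw [happ, List.nodup_append] at hnd
        have hx₁x₂ : x₁ ≠ x₂ := fun h => hnd.2.2 x₁ hx₁ x₂ hx₂ h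
        have hyx₁ : y ≠ x₁ := fun h => hyT (happ ▸ List.mem_append.mpr (Or.inl (h ▸ hx₁)))
        have hyx₂ : y ≠ x₂ := fun h => hyT (happ ▸ List.mem_append.mpr (Or.inr (h ▸ hx₂)))
        have hx₁s : x₁ ∈ s := hsupp _ (happ ▸ List.mem_append.mpr (Or.inl hx₁))
        have hx₂s : x₂ ∈ s := hsupp _ (happ ▸ List.mem_append.mpr (Or.inr hx₂))
        have hsub : ({x₁, x₂, y} : Finset V) ⊆ s.filter (fun x => G.Adj z x) := by
          intro t ht
          simp only [Finset.mem_insert, Finset.mem_singleton] at ht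
          rcases ht with rfl | rfl | rfl
          · exact Finset.mem_filter.mpr ⟨hx₁s, h₁⟩
          · exact Finset.mem_filter.mpr ⟨hx₂s, h₂⟩
          · exact Finset.mem_filter.mpr ⟨hys, hyz.symm⟩
        have hcard : ({x₁, x₂, y} : Finset V).card = 3 :=
          Finset.card_eq_three.mpr ⟨x₁, x₂, y, hx₁x₂, fun h => hyx₁ h.symm, fun h => hyx₂ h.symm, rfl⟩
        have := Finset.card_le_card hsub
        have := hd z hzs
        omega
  refine ⟨w.support, hw.support_nodup, fun x => ⟨fun hx => hsupp x hx, fun hx => hcov x hx⟩, ?_⟩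
  intro x y hxy hxs hys
  rcases adj_consec hacyc w hw hxy (hcov x hxs) (hcov y hys) with ⟨l₁, l₂, hl⟩ | ⟨l₁, l₂, hl⟩
  · left; rw [hl]; exact indexOf_infix _ _ (hl ▸ hw.support_nodup)
  · right; rw [hl]; exact indexOf_infix _ _ (hl ▸ hw.support_nodup)

lemma lrw_le_one_of_equiv (G : SimpleGraph V) (e : Fin (Fintype.card V) ≃ V)
    (h : ∀ i : Fin (Fintype.card V), ∃ w, ∀ a b : V,
      a ∈ (Finset.Iic i).image e → b ∉ (Finset.Iic i).image e → G.Adj a b → b = w) :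
    lrw G ≤ 1 := by
  unfold lrw
  refine le_trans (ciInf_le' _ e) ?_
  unfold ordCutrk
  refine Finset.sup_le fun i _ => ?_
  obtain ⟨w, hw⟩ := h i
  exact cutrk_le_one_of_target w hw

theorem stmt7 (G : SimpleGraph V) (h : IsCaterpillar G) : lrw G ≤ 1 := by
  classical
  obtain ⟨htree, hpath⟩ := h
  by_cases hsmall : Fintype.card V ≤ 2
  · -- small case
    unfold lrw
    refine le_trans (ciInf_le' _ (Fintype.equivFin V).symm) ?_
    unfold ordCutrk
    refine Finset.sup_le fun i _ => ?_
    set X := (Finset.Iic i).image (Fintype.equivFin V).symm with hX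
    have hX1 : 1 ≤ X.card := Finset.card_pos.mpr
      ⟨_, Finset.mem_image.mpr ⟨i, Finset.mem_Iic.mpr le_rfl, rfl⟩⟩
    have hcompl : (Xᶜ : Finset V).card ≤ 1 := by
      rw [Finset.card_compl]; omega
    unfold cutrk
    refine le_trans (Matrix.rank_le_card_width _) ?_
    rw [Fintype.card_coe]
    exact hcompl
  · push_neg at hsmall
    have hacyc := htree.IsAcyclic
    have hconn := htree.isConnected
    -- degree and spine basics
    have hdeg_iff : ∀ v : V, (G.neighborSet v).ncard = G.degree v := by
      intro v
      rw [Set.ncard_eq_toFinset_card', Set.toFinset_card]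
      exact G.card_neighborSet_eq_degree v
    set S : Set V := {v | (G.neighborSet v).ncard ≠ 1} with hSdef
    set sF : Finset V := Finset.univ.filter (fun v => G.degree v ≠ 1) with hsFdef
    have hmemS : ∀ v, v ∈ S ↔ G.degree v ≠ 1 := by
      intro v; rw [hSdef]; simp only [Set.mem_setOf_eq, hdeg_iff v]
    have hmem_sF : ∀ v, v ∈ sF ↔ G.degree v ≠ 1 := by
      intro v; rw [hsFdef]; simp
    -- no two adjacent "mutually unique neighbor" vertices
    have h2 : ∀ u v : V, G.Adj u v → (∀ x, G.Adj u x → x = v) → (∀ x, G.Adj v x → x = u) → False := by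
      intro u v hadj hu hv
      have hall : ∀ w : V, w = u ∨ w = v := fun w =>
        walk_confined hu hv ((hconn.preconnected w u).some)
      have hsub : (Finset.univ : Finset V) ⊆ {u, v} := by
        intro w _
        rcases hall w with rfl | rfl <;> simp
      have h1 := Finset.card_le_card hsub
      rw [Finset.card_univ] at h1
      have h3 : ({u, v} : Finset V).card ≤ 2 :=
        le_trans (Finset.card_insert_le _ _) (by simp)
      omega
    have hleaf_ex : ∀ v : V, G.degree v = 1 → ∃! u, G.Adj v u := by
      intro v hv
      obtain ⟨u, hu⟩ := Finset.card_eq_one.mp hv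
      have hu' : u ∈ G.neighborFinset v := by rw [hu]; exact Finset.mem_singleton_self u
      refine ⟨u, (SimpleGraph.mem_neighborFinset _ _ _).mp hu', ?_⟩
      intro x hx
      have hxm : x ∈ G.neighborFinset v := (SimpleGraph.mem_neighborFinset _ _ _).mpr hx
      rw [hu] at hxm
      exact Finset.mem_singleton.mp hxm
    set nbr : V → V := fun v => if h : G.degree v = 1 then (hleaf_ex v h).choose else v with hnbrdef
    have hnb : ∀ v : V, G.degree v = 1 → G.Adj v (nbr v) ∧ ∀ u, G.Adj v u → u = nbr v := by
      intro v hv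
      have : nbr v = (hleaf_ex v hv).choose := by rw [hnbrdef]; simp [hv]
      rw [this]
      exact ⟨(hleaf_ex v hv).choose_spec.1, fun u hu => (hleaf_ex v hv).choose_spec.2 u hu⟩
    have hll : ∀ u v : V, G.Adj u v → G.degree u = 1 → G.degree v = 1 → False := by
      intro u v huv h1 h1'
      refine h2 u v huv ?_ ?_
      · exact fun x hx => ((hnb u h1).2 x hx).trans ((hnb u h1).2 v huv).symm
      · exact fun x hx => ((hnb v h1').2 x hx).trans ((hnb v h1').2 u huv.symm).symm
    have hnb_spine : ∀ v : V, G.degree v = 1 → G.degree (nbr v) ≠ 1 := by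
      intro v hv h1
      exact hll v (nbr v) (hnb v hv).1 hv h1
    -- sF nonempty
    have hsne : sF.Nonempty := by
      by_contra hemp
      have hall : ∀ v : V, G.degree v = 1 := by
        intro v
        by_contra h1
        exact hemp ⟨v, (hmem_sF v).mpr h1⟩
      have hsum := G.sum_degrees_eq_twice_card_edges
      have hE := htree.card_edgeFinset
      have hsum2 : ∑ v : V, G.degree v = Fintype.card V := by
        rw [Finset.sum_congr rfl (fun v _ => hall v)]
        simp [Finset.card_univ]
      rw [hsum2] at hsum
      rw [← hE] at hsum hsmall
      omega
    -- connectivity within sF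
    have hcS : ∀ a ∈ sF, ∀ b ∈ sF, ∃ p : G.Walk a b, ∀ x ∈ p.support, x ∈ sF := by
      intro a ha b hb
      have ha' : a ∈ S := (hmemS a).mpr ((hmem_sF a).mp ha)
      have hb' : b ∈ S := (hmemS b).mpr ((hmem_sF b).mp hb)
      obtain ⟨W⟩ := hpath.1 ⟨a, ha'⟩ ⟨b, hb'⟩
      refine ⟨W.map (SimpleGraph.Embedding.induce S).toHom, ?_⟩
      intro x hx
      have hx : x ∈ W.support.map (SimpleGraph.Embedding.induce (G := G) S).toHom := by rw [← Walk.support_map]; exact hx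
      obtain ⟨⟨x', hx'⟩, -, rfl⟩ := List.mem_map.mp hx
      exact (hmem_sF _).mpr ((hmemS _).mp hx')
    -- degrees within sF
    have hdS : ∀ a ∈ sF, (sF.filter (fun x => G.Adj a x)).card ≤ 2 := by
      intro a ha
      have ha' : a ∈ S := (hmemS a).mpr ((hmem_sF a).mp ha)
      have h2' := hpath.2.2 ⟨a, ha'⟩
      have himg : ((sF.filter (fun x => G.Adj a x)) : Set V) ⊆
          Subtype.val '' ((G.induce S).neighborSet ⟨a, ha'⟩) := by
        intro x hx
        rw [Finset.coe_filter, Set.mem_setOf_eq] at hx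
        refine ⟨⟨x, (hmemS x).mpr ((hmem_sF x).mp hx.1)⟩, ?_, rfl⟩
        rw [SimpleGraph.mem_neighborSet]
        exact hx.2
      calc (sF.filter (fun x => G.Adj a x)).card
          = ((sF.filter (fun x => G.Adj a x) : Finset V) : Set V).ncard :=
            (Set.ncard_coe_finset _).symm
        _ ≤ (Subtype.val '' ((G.induce S).neighborSet ⟨a, ha'⟩)).ncard :=
            Set.ncard_le_ncard himg (Set.toFinite _)
        _ = ((G.induce S).neighborSet ⟨a, ha'⟩).ncard :=
            Set.ncard_image_of_injective _ Subtype.val_injective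
        _ ≤ 2 := h2'
    obtain ⟨SL, hSLnd, hSLmem, hSLcons⟩ := exists_path_list G hacyc sF hsne hcS hdS
    -- key machinery
    set spineOf : V → V := fun v => if G.degree v = 1 then nbr v else v with hspineOfdef
    set idxB : V → ℕ := fun v => List.idxOf (spineOf v) SL with hidxBdef
    set inb : V → ℕ := fun v => if G.degree v = 1 then 0 else 1 with hinbdef
    set iv : V → ℕ := fun v => ((Fintype.equivFin V) v : ℕ) with hivdef
    set key : V → ℕ := fun v => (2 * idxB v + inb v) * Fintype.card V + iv v with hkeydef
    have hiv_lt : ∀ v, iv v < Fintype.card V := fun v => ((Fintype.equivFin V) v).isLt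
    have hinb_le : ∀ v, inb v ≤ 1 := by
      intro v; simp only [hinbdef]; split <;> omega
    have hkey_lt : ∀ a b : V, key a < key b ↔
        (2 * idxB a + inb a < 2 * idxB b + inb b ∨
         (2 * idxB a + inb a = 2 * idxB b + inb b ∧ iv a < iv b)) := by
      intro a b
      simp only [hkeydef]
      exact blockLt _ _ _ _ (hiv_lt a) (hiv_lt b)
    have hkey_inj : ∀ a b : V, key a = key b → a = b := by
      intro a b hk
      have h1 : ¬ key a < key b := by omega
      have h2 : ¬ key b < key a := by omega
      rw [hkey_lt] at h1 h2
      push_neg at h1 h2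
      obtain ⟨h1a, h1b⟩ := h1
      obtain ⟨h2a, h2b⟩ := h2
      have hblk : 2 * idxB a + inb a = 2 * idxB b + inb b := by omega
      have hiv : iv a = iv b := by
        have t1 := h1b hblk
        have t2 := h2b hblk.symm
        omega
      simp only [hivdef] at hiv
      exact (Fintype.equivFin V).injective (Fin.val_injective hiv)
    have hspine_spineOf : ∀ v, G.degree v ≠ 1 → spineOf v = v := by
      intro v hv; simp only [hspineOfdef]; rw [if_neg hv]
    have hspine_inb : ∀ v, G.degree v ≠ 1 → inb v = 1 := by
      intro v hv; simp only [hinbdef]; rw [if_neg hv]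
    have hleaf_spineOf : ∀ v, G.degree v = 1 → spineOf v = nbr v := by
      intro v hv; simp only [hspineOfdef]; rw [if_pos hv]
    have hleaf_inb : ∀ v, G.degree v = 1 → inb v = 0 := by
      intro v hv; simp only [hinbdef]; rw [if_pos hv]
    have hidx_inj : ∀ c d, G.degree c ≠ 1 → G.degree d ≠ 1 → idxB c = idxB d → c = d := by
      intro c d hcs hds hcd
      simp only [hidxBdef, hspine_spineOf c hcs, hspine_spineOf d hds] at hcd
      exact (List.idxOf_inj ((hSLmem c).mpr ((hmem_sF c).mpr hcs))).mp hcd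
    have hkey_le_blk : ∀ a b : V, key a < key b → 2 * idxB a + inb a ≤ 2 * idxB b + inb b := by
      intro a b h
      rcases (hkey_lt a b).mp h with h' | ⟨h', -⟩ <;> omega
    have hPE : ∀ a b : V, G.Adj a b → key a < key b →
        G.degree b ≠ 1 ∧ ∀ c, G.degree c ≠ 1 → key a < key c → key c < key b → False := by
      intro a b hadj hab
      by_cases hbl : G.degree b = 1
      · exfalso
        have hal : G.degree a ≠ 1 := fun hal => hll a b hadj hal hbl
        have hba : a = nbr b := (hnb b hbl).2 a hadj.symm
        have hib : idxB b = idxB a := by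
          simp only [hidxBdef]
          rw [hleaf_spineOf b hbl, ← hba, hspine_spineOf a hal]
        have h1 := hkey_le_blk a b hab
        rw [hspine_inb a hal, hleaf_inb b hbl, hib] at h1
        omega
      · refine ⟨hbl, ?_⟩
        intro c hcs hac hcb
        by_cases hal : G.degree a = 1
        · have hba : b = nbr a := (hnb a hal).2 b hadj
          have hib : idxB a = idxB b := by
            simp only [hidxBdef]
            rw [hleaf_spineOf a hal, ← hba, hspine_spineOf b hbl]
          have h1 := hkey_le_blk a c hac
          have h2 := hkey_le_blk c b hcb
          rw [hleaf_inb a hal, hspine_inb c hcs, hib] at h1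
          rw [hspine_inb c hcs, hspine_inb b hbl] at h2
          have hcbeq : c = b := hidx_inj c b hcs hbl (by omega)
          exact absurd hcb (by rw [hcbeq]; exact lt_irrefl _)
        · have hia : idxB a < idxB b := by
            have h1 := hkey_le_blk a b hab
            rw [hspine_inb a hal, hspine_inb b hbl] at h1
            have hne : idxB a ≠ idxB b := fun he => hadj.ne (hidx_inj a b hal hbl he)
            omega
          have hcons := hSLcons a b hadj ((hmem_sF a).mpr hal) ((hmem_sF b).mpr hbl)
          have hIa : idxB a = List.idxOf a SL := by
            simp only [hidxBdef]; rw [hspine_spineOf a hal]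
          have hIb : idxB b = List.idxOf b SL := by
            simp only [hidxBdef]; rw [hspine_spineOf b hbl]
          have hconsec : idxB b = idxB a + 1 := by
            rcases hcons with h' | h'
            · rw [hIa, hIb]; exact h'
            · exfalso; rw [← hIa, ← hIb] at h'; omega
          have h1 := hkey_le_blk a c hac
          have h2 := hkey_le_blk c b hcb
          rw [hspine_inb a hal, hspine_inb c hcs] at h1
          rw [hspine_inb c hcs, hspine_inb b hbl] at h2
          have hcab : idxB c = idxB a ∨ idxB c = idxB b := by omega
          rcases hcab with he | he
          · exact absurd hac (by rw [hidx_inj c a hcs hal he]; exact lt_irrefl _)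
          · exact absurd hcb (by rw [hidx_inj c b hcs hbl he]; exact lt_irrefl _)
    -- build the sorted list and equivalence
    have hkinj : Function.Injective key := fun a b h => hkey_inj a b h
    let r : V → V → Prop := fun a b => key a ≤ key b
    haveI hdec : DecidableRel r := fun a b => Nat.decLe _ _
    haveI : IsTrans V r := ⟨fun a b c hab hbc => le_trans hab hbc⟩
    haveI : IsAntisymm V r := ⟨fun a b hab hba => hkinj (le_antisymm hab hba)⟩
    haveI : IsTotal V r := ⟨fun a b => le_total _ _⟩
    set L : List V := Finset.sort Finset.univ r with hLdef
    have hLnd : L.Nodup := Finset.sort_nodup Finset.univ r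
    have hLmem : ∀ v : V, v ∈ L := fun v => (Finset.mem_sort r).mpr (Finset.mem_univ v)
    have hLsort : L.Pairwise r := Finset.pairwise_sort Finset.univ r
    have hlen : L.length = Fintype.card V := by
      rw [hLdef, Finset.length_sort, Finset.card_univ]
    have hbij : Function.Bijective
        (fun i : Fin (Fintype.card V) => L.get (Fin.cast hlen.symm i)) := by
      constructor
      · intro i j h
        have h2 := (hLnd.get_inj_iff).mp h
        have h3 := congrArg Fin.val h2
        simp only [Fin.coe_cast] at h3
        exact Fin.ext h3
      · intro v
        obtain ⟨k, hk⟩ := List.mem_iff_get.mp (hLmem v)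
        refine ⟨Fin.cast hlen k, ?_⟩
        show L.get (Fin.cast hlen.symm (Fin.cast hlen k)) = v
        rw [show Fin.cast hlen.symm (Fin.cast hlen k) = k from Fin.ext (by simp)]
        exact hk
    set e : Fin (Fintype.card V) ≃ V := Equiv.ofBijective _ hbij with hedef
    have hmono : ∀ i j : Fin (Fintype.card V), i < j → key (e i) < key (e j) := by
      intro i j hij
      have hlt : (Fin.cast hlen.symm i) < (Fin.cast hlen.symm j) := by
        rw [Fin.lt_def, Fin.coe_cast, Fin.coe_cast]
        exact hij
      have hle : r (L.get (Fin.cast hlen.symm i)) (L.get (Fin.cast hlen.symm j)) :=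
        hLsort.rel_get_of_lt hlt
      have hne : e i ≠ e j := e.injective.ne (Fin.ne_of_lt hij)
      exact lt_of_le_of_ne hle fun hk => hne (hkinj hk)
    refine lrw_le_one_of_equiv G e ?_
    intro i
    set X := (Finset.Iic i).image e with hXdef
    have hkeyX : ∀ a b : V, a ∈ X → b ∉ X → key a < key b := by
      intro a b ha hb
      obtain ⟨j, hj, rfl⟩ := Finset.mem_image.mp ha
      have hbk : ¬ e.symm b ≤ i := fun hk =>
        hb (Finset.mem_image.mpr ⟨e.symm b, Finset.mem_Iic.mpr hk, e.apply_symm_apply b⟩)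
      have hj' : j < e.symm b := lt_of_le_of_lt (Finset.mem_Iic.mp hj) (lt_of_not_ge hbk)
      have hm := hmono _ _ hj'
      rwa [e.apply_symm_apply] at hm
    by_cases hex : ∃ a b : V, a ∈ X ∧ b ∉ X ∧ G.Adj a b
    · obtain ⟨a₀, b₀, ha₀, hb₀, hadj₀⟩ := hex
      refine ⟨b₀, ?_⟩
      intro a b ha hb hadj
      have h1 := hkeyX a b ha hb
      have h0 := hkeyX a₀ b₀ ha₀ hb₀
      have hsp := (hPE a b hadj h1).1
      have hsp0 := (hPE a₀ b₀ hadj₀ h0).1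
      rcases lt_trichotomy (key b) (key b₀) with hlt | heq | hgt
      · exact ((hPE a₀ b₀ hadj₀ h0).2 b hsp (hkeyX a₀ b ha₀ hb) hlt).elim
      · exact hkey_inj _ _ heq
      · exact ((hPE a b hadj h1).2 b₀ hsp0 (hkeyX a b₀ ha hb₀) hgt).elim
    · push_neg at hex
      exact ⟨e i, fun a b ha hb hadj => absurd hadj (hex a b ha hb)⟩
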